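/- Let R be a commutative ring and A an R-module equipped with bilinear operations ⊢ and ⊥ satisfying the Lie tri-algebra identities: x ⊥ y = -(y ⊥ x); ((x⊥y)⊥z) + ((y⊥z)⊥x) + ((z⊥x)⊥y) = 0; x ⊢ (y ⊢ z) = (x ⊢ y) ⊢ z + y ⊢ (x ⊢ z); (x ⊥ y) ⊢ z = (x ⊢ y) ⊢ z; and (x ⊢ y) ⊥ z = x ⊢ (y ⊥ z) + (x ⊢ z) ⊥ y. Define x ⊣ y := -(y ⊢ x). Then for all x, y, z ∈ A: (x ⊥ (y ⊣ z)) + ((x ⊣ z) ⊥ y) - ((x ⊥ y) ⊣ z) = 0. -/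
import Mathlib

/-- In any Lie tri-algebra (with operations `⊢`, `⊥` and `x ⊣ y := -(y ⊢ x)`),
the identity `(x ⊥ (y ⊣ z)) + ((x ⊣ z) ⊥ y) - ((x ⊥ y) ⊣ z) = 0` holds. -/
theorem lie_trialgebra_composition_identity (R : Type*) [CommRing R] (A : Type*)
    [AddCommGroup A] [Module R A] (p q : A →ₗ[R] A →ₗ[R] A)
    (hq_skew : ∀ x y : A, q x y = -q y x)
    (hq_jacobi : ∀ x y z : A, q (q x y) z + q (q y z) x + q (q z x) y = 0)
    (hp_leibniz : ∀ x y z : A, p x (p y z) = p (p x y) z + p y (p x z))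
    (h_perp_vdash : ∀ x y z : A, p (q x y) z = p (p x y) z)
    (h_vdash_perp : ∀ x y z : A, q (p x y) z = p x (q y z) + q (p x z) y) :
    ∀ x y z : A, q x (-p z y) + q (-p z x) y - -p z (q x y) = 0 := by
  intro x y z
  have h := h_vdash_perp z x y
  have hs := hq_skew x (p z y)
  simp only [map_neg, LinearMap.neg_apply]
  rw [hs, h]
  abel
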